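/- For constants c and p = c/n, the expected number of vertex subsets S of G_{n,p} of size s, 4 ≤ s ≤ n/(10c^3), that span at least 3s/2 edges is at most the sum over s of (e^{5/2} c^{3/2} s^{1/2} / (3^{3/2} n^{1/2}))^s, which tends to 0 as n → ∞. -/

import Mathlib

open MeasureTheory Filter
open scoped Classical

/-- Bernoulli measure on `Bool` with success probability `min p 1`. -/
noncomputable def bern (p : ℝ) : Measure Bool :=
  (PMF.bernoulli (min (Real.toNNReal p) 1) (min_le_right _ _)).toMeasure

/-- The Erdős–Rényi random graph `G_{n,p}`, modeled as the product Bernoulli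
measure on edge-indicator functions indexed by unordered pairs of `Fin n`. -/
noncomputable def gnp (n : ℕ) (p : ℝ) : Measure (Sym2 (Fin n) → Bool) :=
  Measure.pi fun _ => bern p

/-- The simple graph on `Fin n` determined by an edge-indicator function. -/
def graphOf {n : ℕ} (ω : Sym2 (Fin n) → Bool) : SimpleGraph (Fin n) where
  Adj u v := u ≠ v ∧ ω s(u, v) = true
  symm := by
    constructor
    intro u v h
    exact ⟨h.1.symm, by rw [Sym2.eq_swap]; exact h.2⟩
  loopless := by constructor; intro v h; exact h.1 rfl

/-- The number of edges of the random graph spanned by a vertex set `S`. -/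
noncomputable def edgeIn {n : ℕ} (ω : Sym2 (Fin n) → Bool) (S : Finset (Fin n)) : ℕ :=
  ((graphOf ω).edgeFinset.filter fun e => ∀ v ∈ e, v ∈ S).card

/-- The per-size term `(e^{5/2} c^{3/2} s^{1/2} / (3^{3/2} n^{1/2}))^s` in the
first-moment bound. -/
noncomputable def densTerm (c : ℝ) (n s : ℕ) : ℝ :=
  (Real.exp ((5 : ℝ) / 2) * c ^ ((3 : ℝ) / 2) * Real.sqrt s /
    ((3 : ℝ) ^ ((3 : ℝ) / 2) * Real.sqrt n)) ^ s

/-- The number of vertex sets `S` with `4 ≤ |S| ≤ n/(10c³)` spanning at least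
`3|S|/2` edges. -/
noncomputable def denseSetCount (n : ℕ) (c : ℝ) (ω : Sym2 (Fin n) → Bool) : ℕ :=
  (Finset.univ.filter fun S : Finset (Fin n) =>
    4 ≤ S.card ∧ (S.card : ℝ) ≤ n / (10 * c ^ 3) ∧
      3 * (S.card : ℝ) / 2 ≤ (edgeIn ω S : ℝ)).card

/-! ### Auxiliary lemmas -/

section Aux

lemma edgeIn_le {n : ℕ} (ω : Sym2 (Fin n) → Bool) (S : Finset (Fin n)) :
    edgeIn ω S ≤ ((S.offDiag.image (Function.uncurry Sym2.mk)).filter fun e => ω e = true).card := by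
  apply Finset.card_le_card
  intro e he
  simp only [Finset.mem_filter, SimpleGraph.mem_edgeFinset] at he
  obtain ⟨hedge, hmem⟩ := he
  induction e with
  | _ u v =>
    obtain ⟨hne, htrue⟩ : u ≠ v ∧ ω s(u,v) = true := hedge
    simp only [Finset.mem_filter, Finset.mem_image]
    refine ⟨⟨(u,v), ?_, rfl⟩, htrue⟩
    exact Finset.mem_offDiag.2 ⟨hmem u (by simp), hmem v (by simp), hne⟩

lemma prob_many_edges {n : ℕ} (p : ℝ) (hp : 0 ≤ p) (S : Finset (Fin n)) (m : ℕ) :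
    (gnp n p {ω | m ≤ edgeIn ω S}).toReal ≤ ((S.card.choose 2).choose m : ℝ) * p ^ m := by
  set q : ENNReal := ((min (Real.toNNReal p) 1 : NNReal) : ENNReal) with hq
  set E := S.offDiag.image (Function.uncurry Sym2.mk) with hE
  have hsingle : ∀ T : Finset (Sym2 (Fin n)),
      gnp n p {ω | ∀ e ∈ T, ω e = true} = q ^ T.card := by
    intro T
    have hprob : IsProbabilityMeasure (bern p) := by unfold bern; infer_instance
    have hset : {ω : Sym2 (Fin n) → Bool | ∀ e ∈ T, ω e = true}
        = Set.pi Set.univ (fun e => if e ∈ T then {true} else Set.univ) := by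
      ext ω
      simp only [Set.mem_setOf_eq, Set.mem_pi, Set.mem_univ, forall_true_left]
      constructor
      · intro h e
        by_cases he : e ∈ T <;> simp [he, h e]
      · intro h e he
        have := h e
        simpa [he] using this
    have hone : bern p {true} = q := by
      rw [bern, PMF.toMeasure_apply_singleton _ _ (measurableSet_singleton _)]
      rfl
    rw [gnp, hset, Measure.pi_pi]
    calc ∏ e : Sym2 (Fin n), bern p (if e ∈ T then {true} else Set.univ)
        = ∏ e : Sym2 (Fin n), (if e ∈ T then q else 1) := by
          apply Finset.prod_congr rfl; intro e _
          by_cases he : e ∈ T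
          · simp [he, hone]
          · simp only [he, if_false]; exact measure_univ
      _ = ∏ e ∈ Finset.univ ∩ T, q := Finset.prod_ite_mem _ _ _
      _ = q ^ T.card := by rw [Finset.univ_inter, Finset.prod_const]
  have hsub : {ω : Sym2 (Fin n) → Bool | m ≤ edgeIn ω S}
      ⊆ ⋃ T ∈ E.powersetCard m, {ω | ∀ e ∈ T, ω e = true} := by
    intro ω hω
    have h1 : m ≤ ((E.filter fun e => ω e = true)).card :=
      le_trans hω (edgeIn_le ω S)
    obtain ⟨T, hTsub, hTcard⟩ := Finset.exists_subset_card_eq h1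
    simp only [Set.mem_iUnion, Set.mem_setOf_eq]
    exact ⟨T, Finset.mem_powersetCard.2 ⟨hTsub.trans (Finset.filter_subset _ _), hTcard⟩,
      fun e he => (Finset.mem_filter.1 (hTsub he)).2⟩
  have hunion : gnp n p {ω | m ≤ edgeIn ω S}
      ≤ (E.powersetCard m).card * q ^ m := by
    calc gnp n p {ω | m ≤ edgeIn ω S}
        ≤ ∑ T ∈ E.powersetCard m, gnp n p {ω | ∀ e ∈ T, ω e = true} :=
          le_trans (measure_mono hsub) (measure_biUnion_finset_le _ _)
      _ = ∑ T ∈ E.powersetCard m, q ^ m := by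
          apply Finset.sum_congr rfl; intro T hT
          rw [hsingle T, (Finset.mem_powersetCard.1 hT).2]
      _ = (E.powersetCard m).card * q ^ m := by rw [Finset.sum_const, nsmul_eq_mul]
  have hcard : (E.powersetCard m).card = (S.card.choose 2).choose m := by
    rw [Finset.card_powersetCard, hE, Sym2.card_image_offDiag]
  have hfin : ((S.card.choose 2).choose m : ENNReal) * q ^ m
      ≤ ENNReal.ofReal (((S.card.choose 2).choose m : ℝ) * p ^ m) := by
    rw [ENNReal.ofReal_mul (by positivity), ENNReal.ofReal_pow hp]
    gcongr
    · rw [ENNReal.ofReal_natCast]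
    · exact ENNReal.coe_le_coe.2 (min_le_left _ _)
  rw [hcard] at hunion
  have hle := hunion.trans hfin
  calc (gnp n p {ω | m ≤ edgeIn ω S}).toReal
      ≤ (ENNReal.ofReal (((S.card.choose 2).choose m : ℝ) * p ^ m)).toReal := by
        apply ENNReal.toReal_mono ENNReal.ofReal_ne_top hle
    _ = ((S.card.choose 2).choose m : ℝ) * p ^ m := ENNReal.toReal_ofReal (by positivity)

lemma choose_bound (a k : ℕ) (hk : 0 < k) :
    (a.choose k : ℝ) ≤ (Real.exp 1 * a / k) ^ k := by
  have h1 : (a.choose k : ℝ) ≤ (a : ℝ) ^ k / k.factorial :=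
    Nat.choose_le_pow_div k a
  have hkpos : (0:ℝ) < k := by exact_mod_cast hk
  have hfac : (0:ℝ) < k.factorial := by exact_mod_cast k.factorial_pos
  have h2 : (k : ℝ) ^ k / k.factorial ≤ Real.exp 1 ^ k := by
    rw [Real.exp_one_pow]
    exact Real.pow_div_factorial_le_exp (x := (k:ℝ)) (Nat.cast_nonneg k) k
  rw [div_le_iff₀ hfac] at h2
  refine h1.trans ?_
  rw [div_pow, mul_pow, div_le_div_iff₀ hfac (pow_pos hkpos k)]
  calc (a:ℝ)^k * (k:ℝ)^k ≤ (a:ℝ)^k * (Real.exp 1 ^ k * k.factorial) :=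
        mul_le_mul_of_nonneg_left h2 (by positivity)
    _ = Real.exp 1 ^ k * (a:ℝ)^k * k.factorial := by ring

lemma choose_two_le (s : ℕ) : (s.choose 2 : ℝ) ≤ (s:ℝ)^2 / 2 := by
  have := Nat.choose_le_pow_div (α := ℝ) 2 s
  norm_num [Nat.factorial] at this
  exact this

lemma densTerm_nonneg (c : ℝ) (n s : ℕ) (hc : 0 ≤ c) : 0 ≤ densTerm c n s := by
  unfold densTerm; positivity

lemma main_estimate (c : ℝ) (hc : 0 < c) (n s m : ℕ) (hs4 : 4 ≤ s) (hsn : s ≤ n)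
    (hcond : (s : ℝ) ≤ n / (10 * c ^ 3)) (hcn : c ≤ n)
    (hm : (3 * (s:ℝ)) / 2 ≤ m) :
    (n.choose s : ℝ) * (((s.choose 2).choose m : ℝ) * (c / n) ^ m) ≤ densTerm c n s := by
  have hn0 : (0:ℝ) < n := lt_of_lt_of_le hc hcn
  have hs0 : (0:ℝ) < s := by exact_mod_cast Nat.lt_of_lt_of_le (by norm_num) hs4
  have hm0 : 0 < m := by
    by_contra h
    push_neg at h
    interval_cases m
    · simp at hm; nlinarith
  have hmR : (0:ℝ) < m := by exact_mod_cast hm0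
  set e : ℝ := Real.exp 1 with he
  have he0 : 0 < e := Real.exp_pos 1
  set X : ℝ := e * s * c / (3 * n) with hX
  have hX0 : 0 < X := by positivity
  have he3 : e < 3 := lt_trans Real.exp_one_lt_d9 (by norm_num)
  have hX1 : X ≤ 1 := by
    rw [hX, div_le_one (by positivity)]
    rcases le_or_gt c 1 with h1 | h1
    · have hsn' : (s:ℝ) ≤ n := Nat.cast_le.2 hsn
      have t1 : e*(s:ℝ)*c ≤ 3*((s:ℝ)*c) := by nlinarith [mul_nonneg hs0.le hc.le]
      have t2 : 3*((s:ℝ)*c) ≤ 3*((n:ℝ)*c) := by nlinarith [mul_le_mul_of_nonneg_right hsn' hc.le]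
      have t3 : 3*((n:ℝ)*c) ≤ 3*(n:ℝ) := by nlinarith
      linarith
    · have hcond' : (s:ℝ) * (10 * c^3) ≤ n := by
        rw [le_div_iff₀ (by positivity)] at hcond
        linarith
      have hccc : c ≤ c^3 := by
        nlinarith [mul_nonneg hc.le (show (0:ℝ) ≤ c^2 - 1 by nlinarith)]
      nlinarith [mul_le_mul_of_nonneg_left hccc (by positivity : (0:ℝ) ≤ 10 * s)]
  have h1 : (n.choose s : ℝ) ≤ (e * n / s) ^ s :=
    choose_bound n s (by omega)
  have h2 : ((s.choose 2).choose m : ℝ) ≤ (e * (s.choose 2) / m) ^ m :=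
    choose_bound _ m hm0
  have h3 : ((s.choose 2).choose m : ℝ) * (c / n) ^ m
      ≤ (e * (s.choose 2) / m * (c / n)) ^ m := by
    rw [mul_pow]
    exact mul_le_mul_of_nonneg_right h2 (by positivity)
  have h4 : e * (s.choose 2 : ℝ) / m * (c / n) ≤ X := by
    have hM := choose_two_le s
    calc e * (s.choose 2 : ℝ) / m * (c / n)
        ≤ e * ((s:ℝ)^2/2) / ((3 * s) / 2) * (c / n) := by gcongr
      _ = X := by rw [hX]; field_simp
  have hXm : X ^ m ≤ (X ^ ((3:ℝ)/2)) ^ s := by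
    have step1 : X ^ m ≤ X ^ ((3 * (s:ℝ)) / 2) := by
      rw [← Real.rpow_natCast X m]
      exact Real.rpow_le_rpow_of_exponent_ge hX0 hX1 hm
    have step2 : X ^ ((3 * (s:ℝ)) / 2) = (X ^ ((3:ℝ)/2)) ^ s := by
      rw [show (3 * (s:ℝ)) / 2 = (3/2) * s by ring, Real.rpow_mul hX0.le,
        Real.rpow_natCast]
    rw [← step2]; exact step1
  have hbase : (e * n / s) * X ^ ((3:ℝ)/2)
      = Real.exp ((5:ℝ)/2) * c ^ ((3:ℝ)/2) * Real.sqrt s /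
        ((3:ℝ) ^ ((3:ℝ)/2) * Real.sqrt n) := by
    rw [hX, Real.div_rpow (by positivity) (by positivity),
      Real.mul_rpow (by positivity) hc.le, Real.mul_rpow (by positivity) hs0.le,
      Real.mul_rpow (by norm_num) hn0.le]
    rw [he, Real.exp_one_rpow]
    rw [show ((s:ℝ)) ^ ((3:ℝ)/2) = s * Real.sqrt s by
      rw [show (3/2:ℝ) = 1 + 1/2 by norm_num, Real.rpow_add hs0, Real.rpow_one,
        ← Real.sqrt_eq_rpow]]
    rw [show ((n:ℝ)) ^ ((3:ℝ)/2) = n * Real.sqrt n by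
      rw [show (3/2:ℝ) = 1 + 1/2 by norm_num, Real.rpow_add hn0, Real.rpow_one,
        ← Real.sqrt_eq_rpow]]
    rw [show Real.exp ((5:ℝ)/2) = e * Real.exp ((3:ℝ)/2) by
      rw [he, ← Real.exp_add]; norm_num]
    have h3pos : (0:ℝ) < (3:ℝ) ^ ((3:ℝ)/2) := Real.rpow_pos_of_pos (by norm_num) _
    have hsq : (0:ℝ) < Real.sqrt n := Real.sqrt_pos.2 hn0
    have hsqs : (0:ℝ) < Real.sqrt s := Real.sqrt_pos.2 hs0
    field_simp
    ring
  calc (n.choose s : ℝ) * (((s.choose 2).choose m : ℝ) * (c / n) ^ m)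
      ≤ (e * n / s) ^ s * ((e * (s.choose 2) / m * (c / n)) ^ m) :=
        mul_le_mul h1 h3 (by positivity) (by positivity)
    _ ≤ (e * n / s) ^ s * X ^ m :=
        mul_le_mul_of_nonneg_left (pow_le_pow_left₀ (by positivity) h4 m) (by positivity)
    _ ≤ (e * n / s) ^ s * (X ^ ((3:ℝ)/2)) ^ s :=
        mul_le_mul_of_nonneg_left hXm (by positivity)
    _ = ((e * n / s) * X ^ ((3:ℝ)/2)) ^ s := (mul_pow _ _ _).symm
    _ = densTerm c n s := by rw [hbase]; rfl

lemma ratio_lt_one : Real.exp ((5:ℝ)/2) / ((3:ℝ) ^ ((3:ℝ)/2) * Real.sqrt 10) < 1 := by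
  have hpos : (0:ℝ) < (3:ℝ) ^ ((3:ℝ)/2) * Real.sqrt 10 := by positivity
  rw [div_lt_one hpos]
  have hsq : ((3:ℝ) ^ ((3:ℝ)/2) * Real.sqrt 10)^2 = 270 := by
    rw [mul_pow, Real.sq_sqrt (by norm_num : (0:ℝ) ≤ 10),
      ← Real.rpow_natCast ((3:ℝ) ^ ((3:ℝ)/2)) 2,
      ← Real.rpow_mul (by norm_num : (0:ℝ) ≤ 3)]
    rw [show ((3:ℝ)/2) * ((2:ℕ):ℝ) = ((3:ℕ):ℝ) by norm_num, Real.rpow_natCast]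
    norm_num
  have hexp : Real.exp ((5:ℝ)/2)^2 < 270 := by
    rw [sq, ← Real.exp_add]
    norm_num
    calc Real.exp (5:ℝ) = Real.exp 1 ^ (5:ℕ) := by
          rw [← Real.exp_nat_mul]; norm_num
      _ < 2.7182818286 ^ (5:ℕ) := by
          apply pow_lt_pow_left₀ Real.exp_one_lt_d9 (Real.exp_pos 1).le
          norm_num
      _ < 270 := by norm_num
  nlinarith [Real.exp_pos ((5:ℝ)/2), hpos]

lemma tendsto_part (c : ℝ) (hc : 0 < c) :
    Tendsto (fun n : ℕ => ∑ s ∈ Finset.Icc 4 n,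
        (if (s : ℝ) ≤ n / (10 * c ^ 3) then densTerm c n s else 0))
      atTop (nhds 0) := by
  set r : ℝ := Real.exp ((5:ℝ)/2) / ((3:ℝ) ^ ((3:ℝ)/2) * Real.sqrt 10) with hrdef
  have hr0 : 0 < r := by positivity
  have hr1 : r < 1 := ratio_lt_one
  set A : ℝ := Real.exp ((5:ℝ)/2) * c ^ ((3:ℝ)/2) / (3:ℝ) ^ ((3:ℝ)/2) with hAdef
  have hA0 : 0 < A := by positivity
  have hsum : Summable (fun j : ℕ => ((j:ℝ)+4)^2 * r^j) := by
    have h2 : Summable (fun j : ℕ => ((j:ℝ))^2 * r^j) := by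
      simpa using summable_pow_mul_geometric_of_norm_lt_one 2
        (r := r) (by rw [Real.norm_eq_abs, abs_of_pos hr0]; exact hr1)
    have h1 : Summable (fun j : ℕ => ((j:ℝ))^1 * r^j) := by
      simpa using summable_pow_mul_geometric_of_norm_lt_one 1
        (r := r) (by rw [Real.norm_eq_abs, abs_of_pos hr0]; exact hr1)
    have h0 : Summable (fun j : ℕ => r^j) := summable_geometric_of_lt_one hr0.le hr1
    have := (h2.add ((h1.mul_left 8).add (h0.mul_left 16)))
    apply this.congr
    intro j
    ring
  set C : ℝ := ∑' j : ℕ, ((j:ℝ)+4)^2 * r^j with hCdef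
  have hC0 : 0 ≤ C := tsum_nonneg (fun j => by positivity)
  have hbound : ∀ n : ℕ, ∑ s ∈ Finset.Icc 4 n,
      (if (s : ℝ) ≤ n / (10 * c ^ 3) then densTerm c n s else 0)
      ≤ A^4 * C / (n:ℝ)^2 := by
    intro n
    rcases Nat.lt_or_ge n 4 with hn4 | hn4
    · rw [Finset.Icc_eq_empty (by omega)]
      simp only [Finset.sum_empty]
      positivity
    have hn0 : (0:ℝ) < n := by exact_mod_cast Nat.lt_of_lt_of_le (by norm_num) hn4
    have step1 : ∀ s ∈ Finset.Icc 4 n,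
        (if (s : ℝ) ≤ n / (10 * c ^ 3) then densTerm c n s else 0)
        ≤ (A^4 * (s:ℝ)^2 / (n:ℝ)^2) * r^(s-4) := by
      intro s hs
      rw [Finset.mem_Icc] at hs
      have hs0 : (0:ℝ) < s := by exact_mod_cast Nat.lt_of_lt_of_le (by norm_num) hs.1
      by_cases hcond : (s : ℝ) ≤ n / (10 * c ^ 3)
      · rw [if_pos hcond]
        set b : ℝ := Real.exp ((5:ℝ)/2) * c ^ ((3:ℝ)/2) * Real.sqrt s /
          ((3:ℝ) ^ ((3:ℝ)/2) * Real.sqrt n) with hbdef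
        have hb0 : 0 ≤ b := by positivity
        have hsqrtc : Real.sqrt (c^3) = c ^ ((3:ℝ)/2) := by
          rw [Real.sqrt_eq_rpow, ← Real.rpow_natCast c 3, ← Real.rpow_mul hc.le]
          norm_num
        have hbr : b ≤ r := by
          have h5 : Real.sqrt s * (Real.sqrt 10 * c ^ ((3:ℝ)/2)) ≤ Real.sqrt n := by
            have hmono := Real.sqrt_le_sqrt hcond
            have hdiv : Real.sqrt ((n:ℝ) / (10 * c^3))
                = Real.sqrt n / (Real.sqrt 10 * c ^ ((3:ℝ)/2)) := by
              rw [Real.sqrt_div (Nat.cast_nonneg n), Real.sqrt_mul (by norm_num), hsqrtc]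
            rw [hdiv] at hmono
            have hpos10 : (0:ℝ) < Real.sqrt 10 * c ^ ((3:ℝ)/2) := by positivity
            rw [le_div_iff₀ hpos10] at hmono
            exact hmono
          rw [hbdef, hrdef, div_le_div_iff₀ (by positivity) (by positivity)]
          have hkey := mul_le_mul_of_nonneg_left h5
            (show (0:ℝ) ≤ Real.exp ((5:ℝ)/2) * (3:ℝ) ^ ((3:ℝ)/2) by positivity)
          nlinarith [hkey]
        have hds : densTerm c n s = b ^ s := rfl
        have hsplit : b ^ s = b ^ 4 * b ^ (s - 4) := by
          rw [← pow_add]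
          congr 1
          omega
        have hb4 : b ^ 4 = A^4 * (s:ℝ)^2 / (n:ℝ)^2 := by
          rw [hbdef, hAdef]
          rw [div_pow, mul_pow, mul_pow, div_pow, mul_pow]
          rw [show Real.sqrt (s:ℝ) ^ 4 = ((Real.sqrt s)^2)^2 by ring,
            show Real.sqrt (n:ℝ) ^ 4 = ((Real.sqrt n)^2)^2 by ring,
            Real.sq_sqrt hs0.le, Real.sq_sqrt hn0.le]
          field_simp
        rw [hds, hsplit, hb4]
        apply mul_le_mul_of_nonneg_left (pow_le_pow_left₀ hb0 hbr _) (by positivity)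
      · rw [if_neg hcond]
        positivity
    refine le_trans (Finset.sum_le_sum step1) ?_
    have hre : ∑ s ∈ Finset.Icc 4 n, (A^4 * (s:ℝ)^2 / (n:ℝ)^2) * r^(s-4)
        = ∑ j ∈ Finset.range (n + 1 - 4), (A^4 * ((4+j:ℕ):ℝ)^2 / (n:ℝ)^2) * r^((4+j)-4) := by
      rw [← Finset.Ico_add_one_right_eq_Icc, Finset.sum_Ico_eq_sum_range]
    rw [hre]
    have heq : ∀ j ∈ Finset.range (n + 1 - 4),
        (A^4 * ((4+j:ℕ):ℝ)^2 / (n:ℝ)^2) * r^((4+j)-4)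
        = A^4 / (n:ℝ)^2 * (((j:ℝ)+4)^2 * r^j) := by
      intro j _
      have : (4+j) - 4 = j := by omega
      rw [this]
      push_cast
      ring
    rw [Finset.sum_congr rfl heq, ← Finset.mul_sum]
    rw [show A^4 * C / (n:ℝ)^2 = A^4/(n:ℝ)^2 * C by ring]
    apply mul_le_mul_of_nonneg_left _ (by positivity)
    exact Summable.sum_le_tsum _ (fun j _ => mul_nonneg (by positivity) (pow_nonneg hr0.le j)) hsum
  apply squeeze_zero (fun n => Finset.sum_nonneg (fun s _ => by
    split
    · exact densTerm_nonneg c _ _ hc.le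
    · exact le_rfl)) hbound
  have h2 : Tendsto (fun n : ℕ => ((n:ℝ)^2)) atTop atTop :=
    (tendsto_pow_atTop (by norm_num : (2:ℕ) ≠ 0)).comp tendsto_natCast_atTop_atTop
  have h3 := h2.inv_tendsto_atTop
  have h4 := h3.const_mul (A^4*C)
  simpa [div_eq_mul_inv] using h4

lemma part1 (c : ℝ) (hc : 0 < c) (n : ℕ) (hcn : c ≤ n) :
    ∫ ω, (denseSetCount n c ω : ℝ) ∂ gnp n (c / n) ≤
      ∑ s ∈ Finset.Icc 4 n,
        (if (s : ℝ) ≤ n / (10 * c ^ 3) then densTerm c n s else 0) := by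
  have hn0 : (0:ℝ) < n := lt_of_lt_of_le hc hcn
  set p : ℝ := c / n with hp
  have hp0 : 0 ≤ p := by positivity
  haveI hprob : IsProbabilityMeasure (gnp n p) := by
    unfold gnp bern; infer_instance
  set D : Finset (Finset (Fin n)) := Finset.univ.filter
    (fun S : Finset (Fin n) => 4 ≤ S.card ∧ (S.card : ℝ) ≤ n / (10 * c ^ 3)) with hD
  have hcount : ∀ ω : Sym2 (Fin n) → Bool, (denseSetCount n c ω : ℝ)
      = ∑ S ∈ D, (if 3 * (S.card : ℝ) / 2 ≤ (edgeIn ω S : ℝ) then (1:ℝ) else 0) := by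
    intro ω
    rw [denseSetCount]
    have hflt : (Finset.univ.filter fun S : Finset (Fin n) =>
        4 ≤ S.card ∧ (S.card : ℝ) ≤ n / (10 * c ^ 3) ∧
          3 * (S.card : ℝ) / 2 ≤ (edgeIn ω S : ℝ))
        = D.filter (fun S => 3 * (S.card : ℝ) / 2 ≤ (edgeIn ω S : ℝ)) := by
      rw [hD, Finset.filter_filter]
      apply Finset.filter_congr
      intro S _
      tauto
    rw [hflt, Finset.card_filter]
    push_cast
    rfl
  calc ∫ ω, (denseSetCount n c ω : ℝ) ∂ gnp n p
      = ∑ S ∈ D, ∫ ω, (if 3 * (S.card : ℝ) / 2 ≤ (edgeIn ω S : ℝ) then (1:ℝ) else 0)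
          ∂ gnp n p := by
        rw [← integral_finset_sum _ (fun S _ => Integrable.of_finite)]
        apply integral_congr_ae
        filter_upwards with ω
        exact hcount ω
    _ = ∑ S ∈ D, (gnp n p {ω | 3 * (S.card : ℝ) / 2 ≤ (edgeIn ω S : ℝ)}).toReal := by
        apply Finset.sum_congr rfl
        intro S _
        have hind : (fun ω : Sym2 (Fin n) → Bool =>
            if 3 * (S.card : ℝ) / 2 ≤ (edgeIn ω S : ℝ) then (1:ℝ) else 0)
            = Set.indicator {ω | 3 * (S.card : ℝ) / 2 ≤ (edgeIn ω S : ℝ)} (fun _ => 1) := by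
          ext ω
          rw [Set.indicator_apply]
          rfl
        rw [hind, integral_indicator_const _ (Set.toFinite _).measurableSet, smul_eq_mul,
          mul_one]; rfl
    _ ≤ ∑ s ∈ Finset.Icc 4 n,
        (if (s : ℝ) ≤ n / (10 * c ^ 3) then densTerm c n s else 0) := by
      rw [← Finset.sum_fiberwise_of_maps_to (g := Finset.card) (t := Finset.Icc 4 n)
        (fun S hS => by
          rw [hD, Finset.mem_filter] at hS
          rw [Finset.mem_Icc]
          exact ⟨hS.2.1, le_trans (Finset.card_le_univ S) (by simp)⟩)]
      apply Finset.sum_le_sum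
      intro s hs
      rw [Finset.mem_Icc] at hs
      rcases Finset.eq_empty_or_nonempty (D.filter (fun S => S.card = s)) with hemp | hne
      · rw [hemp, Finset.sum_empty]
        split
        · exact densTerm_nonneg c _ _ hc.le
        · exact le_rfl
      · obtain ⟨S₀, hS₀⟩ := hne
        rw [Finset.mem_filter, hD, Finset.mem_filter] at hS₀
        have hcond : (s : ℝ) ≤ n / (10 * c ^ 3) := hS₀.2 ▸ hS₀.1.2.2
        rw [if_pos hcond]
        set m : ℕ := ⌈3 * (s:ℝ) / 2⌉₊ with hm
        have hmle : (3 * (s:ℝ)) / 2 ≤ m := Nat.le_ceil _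
        have hterm : ∀ S ∈ D.filter (fun S => S.card = s),
            (gnp n p {ω | 3 * (S.card : ℝ) / 2 ≤ (edgeIn ω S : ℝ)}).toReal
            ≤ ((s.choose 2).choose m : ℝ) * p ^ m := by
          intro S hS
          rw [Finset.mem_filter] at hS
          have hcard : S.card = s := hS.2
          have hset : {ω : Sym2 (Fin n) → Bool | 3 * (S.card : ℝ) / 2 ≤ (edgeIn ω S : ℝ)}
              = {ω | m ≤ edgeIn ω S} := by
            ext ω
            simp only [Set.mem_setOf_eq, hcard, hm]
            exact (Nat.ceil_le).symm
          rw [hset]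
          have := prob_many_edges p hp0 S m
          rwa [hcard] at this
        calc ∑ S ∈ D.filter (fun S => S.card = s),
              (gnp n p {ω | 3 * (S.card : ℝ) / 2 ≤ (edgeIn ω S : ℝ)}).toReal
            ≤ ∑ S ∈ D.filter (fun S => S.card = s),
              ((s.choose 2).choose m : ℝ) * p ^ m := Finset.sum_le_sum hterm
          _ = (D.filter (fun S => S.card = s)).card *
              (((s.choose 2).choose m : ℝ) * p ^ m) := by
              rw [Finset.sum_const, nsmul_eq_mul]
          _ ≤ (n.choose s : ℝ) * (((s.choose 2).choose m : ℝ) * p ^ m) := by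
              apply mul_le_mul_of_nonneg_right _ (by positivity)
              have hsub : D.filter (fun S => S.card = s) ⊆ Finset.univ.powersetCard s := by
                intro S hS
                rw [Finset.mem_filter] at hS
                exact Finset.mem_powersetCard.2 ⟨Finset.subset_univ S, hS.2⟩
              have := Finset.card_le_card hsub
              rw [Finset.card_powersetCard, Finset.card_univ, Fintype.card_fin] at this
              exact_mod_cast this
          _ ≤ densTerm c n s :=
              main_estimate c hc n s m hs.1 hs.2 hcond hcn hmle

end Aux

theorem expected_dense_sets (c : ℝ) (hc : 0 < c) :
    (∀ n : ℕ, c ≤ n →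
      ∫ ω, (denseSetCount n c ω : ℝ) ∂ gnp n (c / n) ≤
        ∑ s ∈ Finset.Icc 4 n,
          (if (s : ℝ) ≤ n / (10 * c ^ 3) then densTerm c n s else 0)) ∧
    Tendsto (fun n : ℕ => ∑ s ∈ Finset.Icc 4 n,
        (if (s : ℝ) ≤ n / (10 * c ^ 3) then densTerm c n s else 0))
      atTop (nhds 0) := by
  exact ⟨fun n hn => part1 c hc n hn, tendsto_part c hc⟩
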